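/- arXiv:1808.09581 — 4 statements merged into one kernel-verified Lean document; each statement's English description precedes it below -/
import Mathlib

section
/- Let n ≥ 5 be an odd integer and let c = (1 2 … n) be the n-cycle in the symmetric group S_n. Then c is an even permutation, so the cyclic subgroup C = ⟨c⟩ (of order n) is contained in the alternating group A_n; the subgroup H of A_n consisting of even permutations fixing the letter n (a copy of A_{n-1}) satisfies H ∩ C = {e} and H C = A_n. In other words, the subgroups A_{n-1} and C_n = ⟨(1 2 … n)⟩ form an exact factorization of A_n. -/
open Fin.NatCast


lemma finRotate_pow_apply {m : ℕ} (k : ℕ) (i : Fin (m + 1)) :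
    ((finRotate (m + 1)) ^ k) i = i + (k : Fin (m + 1)) := by
  induction k generalizing i with
  | zero => simp
  | succ k ih =>
    rw [pow_succ, Equiv.Perm.mul_apply, ih, finRotate_succ_apply]
    push_cast
    abel

lemma orderOf_finRotate' (m : ℕ) : orderOf (finRotate (m + 1)) = m + 1 := by
  refine Nat.dvd_antisymm (orderOf_dvd_of_pow_eq_one ?_) ?_
  · ext i; simp [finRotate_pow_apply]
  · have h : ((finRotate (m + 1)) ^ orderOf (finRotate (m + 1))) 0 = 0 := by
      rw [pow_orderOf_eq_one]; rfl
    rw [finRotate_pow_apply, zero_add] at h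
    exact Fin.natCast_eq_zero.mp h

/-- for odd `n ≥ 5`, the `n`-cycle `c = (1 2 … n)` (realized as
`finRotate n : Equiv.Perm (Fin n)`) is an even permutation, so the cyclic
subgroup `C = ⟨c⟩`, of order `n`, is contained in the alternating group `A_n`;
the copy of `A_{n-1}` inside `A_n` consisting of even permutations fixing the
last letter meets `C` trivially, and `A_{n-1} · C = A_n`: the subgroups
`A_{n-1}` and `C_n` form an exact factorization of `A_n`. -/
theorem alternating_exact_factorization (n : ℕ) (hn : 5 ≤ n) (hodd : Odd n) :
    -- `c` is even, i.e. lies in the alternating group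
    finRotate n ∈ alternatingGroup (Fin n) ∧
    -- hence the cyclic subgroup `C = ⟨c⟩` is contained in `A_n`
    Subgroup.zpowers (finRotate n) ≤ alternatingGroup (Fin n) ∧
    -- `C` has order `n`
    Nat.card (Subgroup.zpowers (finRotate n)) = n ∧
    -- `H ∩ C = {e}`, where `H = A_{n-1}` is the set of even permutations fixing
    -- the letter `n` (the last element of `Fin n`)
    (∀ σ : Equiv.Perm (Fin n),
      σ ∈ alternatingGroup (Fin n) → σ (⟨n - 1, by omega⟩ : Fin n) = ⟨n - 1, by omega⟩ →
      σ ∈ Subgroup.zpowers (finRotate n) → σ = 1) ∧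
    -- `H C = A_n`
    (∀ σ ∈ alternatingGroup (Fin n),
      ∃ τ ∈ alternatingGroup (Fin n),
        τ (⟨n - 1, by omega⟩ : Fin n) = ⟨n - 1, by omega⟩ ∧
        ∃ ρ ∈ Subgroup.zpowers (finRotate n), σ = τ * ρ) := by
  obtain ⟨m, rfl⟩ : ∃ m, n = m + 1 := ⟨n - 1, by omega⟩
  obtain ⟨j, hj⟩ := hodd
  have hmE : Even m := ⟨j, by omega⟩
  have hmem : finRotate (m + 1) ∈ alternatingGroup (Fin (m + 1)) := by
    rw [Equiv.Perm.mem_alternatingGroup, sign_finRotate]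
    exact hmE.neg_one_pow
  have hle : Subgroup.zpowers (finRotate (m + 1)) ≤ alternatingGroup (Fin (m + 1)) :=
    Subgroup.zpowers_le.mpr hmem
  have hpow : ∀ σ ∈ Subgroup.zpowers (finRotate (m + 1)),
      ∃ k : ℕ, σ = (finRotate (m + 1)) ^ k := by
    intro σ hσ
    obtain ⟨k, hk⟩ := (mem_powers_iff_mem_zpowers).mpr hσ
    exact ⟨k, hk.symm⟩
  refine ⟨hmem, hle, ?_, ?_, ?_⟩
  · rw [Nat.card_zpowers, orderOf_finRotate']
  · intro σ _ hfix hσ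
    obtain ⟨k, rfl⟩ := hpow σ hσ
    have := hfix
    rw [finRotate_pow_apply] at this
    have h0 : (k : Fin (m + 1)) = 0 := add_eq_left.mp this
    obtain ⟨d, rfl⟩ := Fin.natCast_eq_zero.mp h0
    rw [pow_mul]
    have h1 : (finRotate (m + 1)) ^ (m + 1) = 1 := by
      ext i; simp [finRotate_pow_apply]
    rw [h1, one_pow]
  · intro σ hσ
    set L : Fin (m + 1) := ⟨m + 1 - 1, by omega⟩
    set k : ℕ := (L - σ⁻¹ L).val
    set ρ : Equiv.Perm (Fin (m + 1)) := (finRotate (m + 1)) ^ k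
    have hρmem : ρ ∈ Subgroup.zpowers (finRotate (m + 1)) :=
      Subgroup.pow_mem _ (Subgroup.mem_zpowers _) k
    refine ⟨σ * ρ⁻¹, ?_, ?_, ρ, hρmem, by group⟩
    · exact (alternatingGroup (Fin (m + 1))).mul_mem hσ (Subgroup.inv_mem _ (hle hρmem))
    · have hρ : ρ (σ⁻¹ L) = L := by
        rw [finRotate_pow_apply]
        simp [k, Fin.cast_val_eq_self]
      have : ρ⁻¹ L = σ⁻¹ L := Equiv.Perm.inv_eq_iff_eq.mpr hρ.symm
      rw [Equiv.Perm.mul_apply, this, ← Equiv.Perm.mul_apply, mul_inv_cancel, Equiv.Perm.one_apply]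
end

section
/- Let H be a Hopf algebra over a field k. Suppose that for all a, b, c ∈ H the identity S(c₍₂₎) a₍₁₎ c₍₃₎ ⊗ S(c₍₄₎) S(a₍₂₎) S²(c₍₁₎) a₍₃₎ b c₍₅₎ = a ⊗ bc holds in H ⊗ H (as an equality of the corresponding linear maps H ⊗ H ⊗ H → H ⊗ H built from the multiplication, comultiplication and antipode of H). Then the adjoint action of H on itself is trivial, and consequently H is commutative. -/
open TensorProduct

section Helpers

variable {k : Type*} [Field k]

/-- Every element of a tensor product is a `ℕ`-indexed finite sum of pure tensors. -/
theorem rep_nat {M N : Type*} [AddCommGroup M] [Module k M] [AddCommGroup N] [Module k N]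
    (z : M ⊗[k] N) :
    ∃ (n : ℕ) (f : ℕ → M) (g : ℕ → N), z = ∑ i ∈ Finset.range n, f i ⊗ₜ[k] g i := by
  induction z using TensorProduct.induction_on with
  | zero => exact ⟨0, 0, 0, by simp⟩
  | tmul m n => exact ⟨1, fun _ => m, fun _ => n, by simp⟩
  | add z₁ z₂ h₁ h₂ =>
    obtain ⟨n₁, f₁, g₁, e₁⟩ := h₁
    obtain ⟨n₂, f₂, g₂, e₂⟩ := h₂
    refine ⟨n₁ + n₂, fun i => if i < n₁ then f₁ i else f₂ (i - n₁),
      fun i => if i < n₁ then g₁ i else g₂ (i - n₁), ?_⟩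
    rw [Finset.sum_range_add]
    congr 1
    · rw [e₁]
      exact Finset.sum_congr rfl fun i hi => by
        simp [Finset.mem_range.1 hi]
    · rw [e₂]
      exact Finset.sum_congr rfl fun i _ => by simp

/-- A family of tensors over a finite index set admits simultaneous finite
representations with a common `ℕ`-range. -/
theorem rep_fun {ι : Type*} {M N : Type*} [AddCommGroup M] [Module k M] [AddCommGroup N]
    [Module k N] (s : Finset ι) (w : ι → M ⊗[k] N) :
    ∃ (B : ℕ) (u : ι → ℕ → M) (v : ι → ℕ → N),
      ∀ i ∈ s, w i = ∑ j ∈ Finset.range B, u i j ⊗ₜ[k] v i j := by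
  choose n u v e using fun i => rep_nat (k := k) (w i)
  refine ⟨s.sup n, fun i j => if j < n i then u i j else 0, v, fun i hi => ?_⟩
  rw [e i]
  rw [← Finset.sum_subset (Finset.range_subset_range.2 (Finset.le_sup hi))
    (fun j _ hj => ?_)]
  · exact Finset.sum_congr rfl fun j hj => by simp [Finset.mem_range.1 hj]
  · have : ¬ j < n i := by simpa using hj
    simp [this]

variable {H : Type*} [Ring H] [HopfAlgebra k H]

open Coalgebra HopfAlgebra

/-- `y ⊗ z ↦ ε z • y`. -/
noncomputable def ΨR : H ⊗[k] H →ₗ[k] H :=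
  (TensorProduct.rid k H).toLinearMap ∘ₗ LinearMap.lTensor H (counit (R := k))

/-- `y ⊗ z ↦ ε y • z`. -/
noncomputable def ΨL : H ⊗[k] H →ₗ[k] H :=
  (TensorProduct.lid k H).toLinearMap ∘ₗ LinearMap.rTensor H (counit (R := k))

@[simp] lemma ΨR_tmul (y z : H) : ΨR (y ⊗ₜ[k] z) = counit (R := k) z • y := by
  simp [ΨR, TensorProduct.rid_tmul]

@[simp] lemma ΨL_tmul (y z : H) : ΨL (y ⊗ₜ[k] z) = counit (R := k) y • z := by
  simp [ΨL, TensorProduct.lid_tmul]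

lemma ΨR_comul (z : H) : ΨR (comul (R := k) z) = z := by
  simp [ΨR, Coalgebra.lTensor_counit_comul, TensorProduct.rid_tmul]

lemma ΨL_comul (z : H) : ΨL (comul (R := k) z) = z := by
  simp [ΨL, Coalgebra.rTensor_counit_comul, TensorProduct.lid_tmul]

lemma sum_counit_right {ι : Type*} {T : Finset ι} {p q : ι → H} {z : H}
    (hd : comul (R := k) z = ∑ i ∈ T, p i ⊗ₜ[k] q i) :
    ∑ i ∈ T, counit (R := k) (q i) • p i = z := by
  have := congrArg (ΨR (k := k) (H := H)) hd
  rw [ΨR_comul, map_sum] at this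
  simpa using this.symm

lemma sum_counit_left {ι : Type*} {T : Finset ι} {p q : ι → H} {z : H}
    (hd : comul (R := k) z = ∑ i ∈ T, p i ⊗ₜ[k] q i) :
    ∑ i ∈ T, counit (R := k) (p i) • q i = z := by
  have := congrArg (ΨL (k := k) (H := H)) hd
  rw [ΨL_comul, map_sum] at this
  simpa using this.symm

lemma sum_counit_both {ι : Type*} {T : Finset ι} {p q : ι → H} {z : H}
    (hd : comul (R := k) z = ∑ i ∈ T, p i ⊗ₜ[k] q i) :
    ∑ i ∈ T, counit (R := k) (p i) * counit (R := k) (q i) = counit (R := k) z := by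
  have := congrArg (counit (R := k) (A := H)) (sum_counit_left hd)
  rw [map_sum] at this
  simpa [smul_eq_mul] using this

lemma sum_antipode_mul' {ι : Type*} {T : Finset ι} {p q : ι → H} {z : H}
    (hd : comul (R := k) z = ∑ i ∈ T, p i ⊗ₜ[k] q i) :
    ∑ i ∈ T, antipode (R := k) (p i) * q i = algebraMap k H (counit (R := k) z) := by
  have := congrArg (fun t => LinearMap.mul' k H
    ((antipode (R := k) (A := H)).rTensor H t)) hd
  simp only [mul_antipode_rTensor_comul_apply, map_sum, LinearMap.rTensor_tmul,
    LinearMap.mul'_apply] at this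
  exact this.symm

lemma sum_mul_antipode' {ι : Type*} {T : Finset ι} {p q : ι → H} {z : H}
    (hd : comul (R := k) z = ∑ i ∈ T, p i ⊗ₜ[k] q i) :
    ∑ i ∈ T, p i * antipode (R := k) (q i) = algebraMap k H (counit (R := k) z) := by
  have := congrArg (fun t => LinearMap.mul' k H
    ((antipode (R := k) (A := H)).lTensor H t)) hd
  simp only [mul_antipode_lTensor_comul_apply, map_sum, LinearMap.lTensor_tmul,
    LinearMap.mul'_apply] at this
  exact this.symm

@[simp] lemma counit_antipode' (y : H) :
    counit (R := k) (antipode (R := k) y) = counit (R := k) y := by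
  obtain ⟨n, p, q, hd⟩ := rep_nat (k := k) (comul (R := k) y)
  have h1 : ∑ i ∈ Finset.range n, counit (R := k) (q i) • p i = y := sum_counit_right hd
  have h2 : ∑ i ∈ Finset.range n, antipode (R := k) (p i) * q i
      = algebraMap k H (counit (R := k) y) := sum_antipode_mul' hd
  have h3 := congrArg (counit (R := k) (A := H)) h2
  rw [map_sum, Bialgebra.counit_algebraMap] at h3
  calc counit (R := k) (antipode (R := k) y)
      = counit (R := k) (antipode (R := k) (∑ i ∈ Finset.range n,
          counit (R := k) (q i) • p i)) := by rw [h1]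
    _ = ∑ i ∈ Finset.range n, counit (R := k) (q i) *
          counit (R := k) (antipode (R := k) (p i)) := by
        rw [map_sum, map_sum]; exact Finset.sum_congr rfl fun i _ => by
          rw [map_smul, map_smul, smul_eq_mul]
    _ = ∑ i ∈ Finset.range n, counit (R := k) (antipode (R := k) (p i) * q i) := by
        exact Finset.sum_congr rfl fun i _ => by
          rw [Bialgebra.counit_mul, mul_comm]
    _ = counit (R := k) y := h3

/-- The linear map `y ⊗ z ↦ S(y) * x * z`. -/
noncomputable def φ (x : H) : H ⊗[k] H →ₗ[k] H :=
  TensorProduct.lift (LinearMap.mk₂ k (fun y z => antipode (R := k) y * x * z)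
    (fun y y' z => by simp [add_mul])
    (fun c y z => by simp [smul_mul_assoc])
    (fun y z z' => by simp [mul_add])
    (fun c y z => by simp [mul_smul_comm]))

@[simp] lemma φ_tmul (x y z : H) :
    φ (k := k) x (y ⊗ₜ[k] z) = antipode (R := k) y * x * z := rfl

/-- The linear map `y ⊗ (z ⊗ w) ↦ y * (S(z) * a * w)`. -/
noncomputable def Θ (a : H) : H ⊗[k] (H ⊗[k] H) →ₗ[k] H :=
  LinearMap.mul' k H ∘ₗ LinearMap.lTensor H (φ (k := k) a)

@[simp] lemma Θ_tmul (a y z w : H) :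
    Θ (k := k) a (y ⊗ₜ[k] (z ⊗ₜ[k] w)) = y * (antipode (R := k) z * a * w) := by
  simp [Θ]

end Helpers

/-- if in a Hopf algebra `H` over a field `k` the identity
`S(c₍₂₎) a₍₁₎ c₍₃₎ ⊗ S(c₍₄₎) S(a₍₂₎) S²(c₍₁₎) a₍₃₎ b c₍₅₎ = a ⊗ bc` holds for all
`a, b, c ∈ H` (Sweedler sums expressed via finite decompositions of the iterated
comultiplications `Δ² a` and `Δ⁴ c`), then the adjoint action
`x ↼ h = S(h₍₁₎) x h₍₂₎` of `H` on itself is trivial, and consequently `H` is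
commutative. -/
theorem adjoint_trivial_of_identity (k H : Type*) [Field k] [Ring H]
    [HopfAlgebra k H]
    (hyp : ∀ (a b c : H) (ι κ : Type) (s : Finset ι) (t : Finset κ)
      (a₁ a₂ a₃ : ι → H) (c₁ c₂ c₃ c₄ c₅ : κ → H),
      (LinearMap.lTensor H (Coalgebra.comul (R := k)))
          (Coalgebra.comul (R := k) a) =
        ∑ i ∈ s, a₁ i ⊗ₜ[k] (a₂ i ⊗ₜ[k] a₃ i) →
      (LinearMap.lTensor H (LinearMap.lTensor H (LinearMap.lTensor H
            (Coalgebra.comul (R := k)))))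
          ((LinearMap.lTensor H (LinearMap.lTensor H (Coalgebra.comul (R := k))))
            ((LinearMap.lTensor H (Coalgebra.comul (R := k)))
              (Coalgebra.comul (R := k) c))) =
        ∑ j ∈ t, c₁ j ⊗ₜ[k] (c₂ j ⊗ₜ[k] (c₃ j ⊗ₜ[k] (c₄ j ⊗ₜ[k] c₅ j))) →
      ∑ i ∈ s, ∑ j ∈ t,
        (HopfAlgebra.antipode (R := k) (c₂ j) * a₁ i * c₃ j) ⊗ₜ[k]
          (HopfAlgebra.antipode (R := k) (c₄ j) *
            HopfAlgebra.antipode (R := k) (a₂ i) *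
            HopfAlgebra.antipode (R := k) (HopfAlgebra.antipode (R := k) (c₁ j)) *
            a₃ i * b * c₅ j) =
        a ⊗ₜ[k] (b * c)) :
    -- the adjoint action of `H` on itself is trivial ...
    (∀ (x h : H) (ι : Type) (s : Finset ι) (h₁ h₂ : ι → H),
      Coalgebra.comul (R := k) h = ∑ i ∈ s, h₁ i ⊗ₜ[k] h₂ i →
      ∑ i ∈ s, HopfAlgebra.antipode (R := k) (h₁ i) * x * h₂ i =
        Coalgebra.counit (R := k) h • x) ∧
    -- ... and consequently `H` is commutative
    (∀ a b : H, a * b = b * a) := by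
  classical
  have adj : ∀ (x h : H) (ι : Type) (s : Finset ι) (h₁ h₂ : ι → H),
      Coalgebra.comul (R := k) h = ∑ i ∈ s, h₁ i ⊗ₜ[k] h₂ i →
      ∑ i ∈ s, HopfAlgebra.antipode (R := k) (h₁ i) * x * h₂ i =
        Coalgebra.counit (R := k) h • x := by
    intro x h ι s h₁ h₂ hΔ
    obtain ⟨n, f, w, hx1⟩ := rep_nat (k := k) (Coalgebra.comul (R := k) x)
    obtain ⟨Na, u, v, hx2⟩ := rep_fun (k := k) (Finset.range n)
      (fun q => Coalgebra.comul (R := k) (w q))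
    obtain ⟨N1, A, B, hc1⟩ := rep_fun (k := k) s
      (fun i => Coalgebra.comul (R := k) (h₂ i))
    obtain ⟨N2, C, D, hc2⟩ := rep_fun (k := k) (s ×ˢ Finset.range N1)
      (fun p => Coalgebra.comul (R := k) (B p.1 p.2))
    obtain ⟨N3, E, F, hc3⟩ := rep_fun (k := k) ((s ×ˢ Finset.range N1) ×ˢ Finset.range N2)
      (fun p => Coalgebra.comul (R := k) (D p.1 p.2))
    -- the decomposition of `Δ² x`
    have ha : (LinearMap.lTensor H (Coalgebra.comul (R := k)))
        (Coalgebra.comul (R := k) x) =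
        ∑ p ∈ Finset.range n ×ˢ Finset.range Na,
          f p.1 ⊗ₜ[k] (u p.1 p.2 ⊗ₜ[k] v p.1 p.2) := by
      rw [Finset.sum_product, hx1, map_sum]
      exact Finset.sum_congr rfl fun q hq => by
        rw [LinearMap.lTensor_tmul, hx2 q hq, TensorProduct.tmul_sum]
    -- the decomposition of `Δ⁴ h`
    have e1 : (LinearMap.lTensor H (Coalgebra.comul (R := k)))
        (Coalgebra.comul (R := k) h) =
        ∑ p ∈ s ×ˢ Finset.range N1, h₁ p.1 ⊗ₜ[k] (A p.1 p.2 ⊗ₜ[k] B p.1 p.2) := by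
      rw [Finset.sum_product, hΔ, map_sum]
      exact Finset.sum_congr rfl fun i hi => by
        rw [LinearMap.lTensor_tmul, hc1 i hi, TensorProduct.tmul_sum]
    have e2 : (LinearMap.lTensor H (LinearMap.lTensor H (Coalgebra.comul (R := k))))
        ((LinearMap.lTensor H (Coalgebra.comul (R := k)))
          (Coalgebra.comul (R := k) h)) =
        ∑ p ∈ (s ×ˢ Finset.range N1) ×ˢ Finset.range N2,
          h₁ p.1.1 ⊗ₜ[k] (A p.1.1 p.1.2 ⊗ₜ[k] (C p.1 p.2 ⊗ₜ[k] D p.1 p.2)) := by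
      rw [Finset.sum_product, e1, map_sum]
      exact Finset.sum_congr rfl fun p hp => by
        rw [LinearMap.lTensor_tmul, LinearMap.lTensor_tmul, hc2 p hp,
          TensorProduct.tmul_sum, TensorProduct.tmul_sum]
    have e3 : (LinearMap.lTensor H (LinearMap.lTensor H (LinearMap.lTensor H
          (Coalgebra.comul (R := k)))))
        ((LinearMap.lTensor H (LinearMap.lTensor H (Coalgebra.comul (R := k))))
          ((LinearMap.lTensor H (Coalgebra.comul (R := k)))
            (Coalgebra.comul (R := k) h))) =
        ∑ p ∈ ((s ×ˢ Finset.range N1) ×ˢ Finset.range N2) ×ˢ Finset.range N3,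
          h₁ p.1.1.1 ⊗ₜ[k] (A p.1.1.1 p.1.1.2 ⊗ₜ[k] (C p.1.1 p.1.2 ⊗ₜ[k]
            (E p.1 p.2 ⊗ₜ[k] F p.1 p.2))) := by
      rw [Finset.sum_product, e2, map_sum]
      exact Finset.sum_congr rfl fun p hp => by
        rw [LinearMap.lTensor_tmul, LinearMap.lTensor_tmul, LinearMap.lTensor_tmul,
          hc3 p hp, TensorProduct.tmul_sum, TensorProduct.tmul_sum,
          TensorProduct.tmul_sum]
    have key := hyp x 1 h (ℕ × ℕ) (((ι × ℕ) × ℕ) × ℕ)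
      (Finset.range n ×ˢ Finset.range Na)
      (((s ×ˢ Finset.range N1) ×ˢ Finset.range N2) ×ˢ Finset.range N3)
      (fun p => f p.1) (fun p => u p.1 p.2) (fun p => v p.1 p.2)
      (fun p => h₁ p.1.1.1) (fun p => A p.1.1.1 p.1.1.2) (fun p => C p.1.1 p.1.2)
      (fun p => E p.1 p.2) (fun p => F p.1 p.2) ha e3
    have key2 := congrArg (ΨR (k := k) (H := H)) key
    simp only [map_sum, ΨR_tmul, Bialgebra.counit_mul, counit_antipode',
      Bialgebra.counit_one, mul_one, one_mul] at key2
    -- now collapse the sums in key2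
    rw [Finset.sum_comm] at key2
    -- Claim A : the `a`-part collapses to `x`
    have claimA : ∑ p ∈ Finset.range n ×ˢ Finset.range Na,
        (Coalgebra.counit (R := k) (u p.1 p.2) * Coalgebra.counit (R := k) (v p.1 p.2))
          • f p.1 = x := by
      rw [Finset.sum_product]
      calc ∑ q ∈ Finset.range n, ∑ r ∈ Finset.range Na,
          (Coalgebra.counit (R := k) (u q r) * Coalgebra.counit (R := k) (v q r)) • f q
          = ∑ q ∈ Finset.range n, Coalgebra.counit (R := k) (w q) • f q := by
            refine Finset.sum_congr rfl fun q hq => ?_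
            rw [← Finset.sum_smul, sum_counit_both (hx2 q hq)]
        _ = x := sum_counit_right hx1
    have inner_collapse : ∀ (c1 c2 c3 : k) (Y Z : H),
        ∑ p ∈ Finset.range n ×ˢ Finset.range Na,
          (c1 * Coalgebra.counit (R := k) (u p.1 p.2) * c2 *
            Coalgebra.counit (R := k) (v p.1 p.2) * c3) • (Y * f p.1 * Z)
        = (c1 * c2 * c3) • (Y * x * Z) := by
      intro c1 c2 c3 Y Z
      calc ∑ p ∈ Finset.range n ×ˢ Finset.range Na,
          (c1 * Coalgebra.counit (R := k) (u p.1 p.2) * c2 *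
            Coalgebra.counit (R := k) (v p.1 p.2) * c3) • (Y * f p.1 * Z)
          = (c1 * c2 * c3) • ∑ p ∈ Finset.range n ×ˢ Finset.range Na,
              (Coalgebra.counit (R := k) (u p.1 p.2) *
                Coalgebra.counit (R := k) (v p.1 p.2)) • (Y * f p.1 * Z) := by
            rw [Finset.smul_sum]
            refine Finset.sum_congr rfl fun p _ => ?_
            rw [smul_smul]
            congr 1
            ring
        _ = (c1 * c2 * c3) • (Y * (∑ p ∈ Finset.range n ×ˢ Finset.range Na,
              (Coalgebra.counit (R := k) (u p.1 p.2) *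
                Coalgebra.counit (R := k) (v p.1 p.2)) • f p.1) * Z) := by
            congr 1
            rw [Finset.mul_sum, Finset.sum_mul]
            exact Finset.sum_congr rfl fun p _ => by
              rw [mul_smul_comm, smul_mul_assoc]
        _ = (c1 * c2 * c3) • (Y * x * Z) := by rw [claimA]
    rw [Finset.sum_congr rfl (fun P _ => inner_collapse
      (Coalgebra.counit (R := k) (E P.1 P.2)) (Coalgebra.counit (R := k) (h₁ P.1.1.1))
      (Coalgebra.counit (R := k) (F P.1 P.2)) (HopfAlgebra.antipode (R := k)
        (A P.1.1.1 P.1.1.2)) (C P.1.1 P.1.2))] at key2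
    -- now collapse the `c`-part
    rw [Finset.sum_product] at key2
    have step2 : ∀ Q ∈ (s ×ˢ Finset.range N1) ×ˢ Finset.range N2,
        ∑ m ∈ Finset.range N3,
          (Coalgebra.counit (R := k) (E Q m) * Coalgebra.counit (R := k) (h₁ Q.1.1) *
            Coalgebra.counit (R := k) (F Q m)) •
              (HopfAlgebra.antipode (R := k) (A Q.1.1 Q.1.2) * x * C Q.1 Q.2)
        = (Coalgebra.counit (R := k) (h₁ Q.1.1) * Coalgebra.counit (R := k) (D Q.1 Q.2)) •
            (HopfAlgebra.antipode (R := k) (A Q.1.1 Q.1.2) * x * C Q.1 Q.2) := by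
      intro Q hQ
      rw [← Finset.sum_smul]
      congr 1
      rw [← sum_counit_both (hc3 Q hQ), Finset.mul_sum]
      exact Finset.sum_congr rfl fun m _ => by ring
    rw [Finset.sum_congr rfl step2] at key2
    rw [Finset.sum_product] at key2
    have step3 : ∀ q ∈ s ×ˢ Finset.range N1,
        ∑ l ∈ Finset.range N2,
          (Coalgebra.counit (R := k) (h₁ q.1) * Coalgebra.counit (R := k) (D q l)) •
            (HopfAlgebra.antipode (R := k) (A q.1 q.2) * x * C q l)
        = Coalgebra.counit (R := k) (h₁ q.1) •
            (HopfAlgebra.antipode (R := k) (A q.1 q.2) * x * B q.1 q.2) := by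
      intro q hq
      calc ∑ l ∈ Finset.range N2,
          (Coalgebra.counit (R := k) (h₁ q.1) * Coalgebra.counit (R := k) (D q l)) •
            (HopfAlgebra.antipode (R := k) (A q.1 q.2) * x * C q l)
          = Coalgebra.counit (R := k) (h₁ q.1) • ∑ l ∈ Finset.range N2,
              HopfAlgebra.antipode (R := k) (A q.1 q.2) * x *
                (Coalgebra.counit (R := k) (D q l) • C q l) := by
            rw [Finset.smul_sum]
            exact Finset.sum_congr rfl fun l _ => by
              rw [mul_smul_comm, ← smul_smul]
        _ = Coalgebra.counit (R := k) (h₁ q.1) •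
            (HopfAlgebra.antipode (R := k) (A q.1 q.2) * x *
              ∑ l ∈ Finset.range N2, Coalgebra.counit (R := k) (D q l) • C q l) := by
            rw [Finset.mul_sum]
        _ = Coalgebra.counit (R := k) (h₁ q.1) •
            (HopfAlgebra.antipode (R := k) (A q.1 q.2) * x * B q.1 q.2) := by
            rw [sum_counit_right (hc2 q hq)]
    rw [Finset.sum_congr rfl step3] at key2
    rw [Finset.sum_product] at key2
    -- final collapse using `φ x`
    have step4 : ∀ i ∈ s,
        ∑ j ∈ Finset.range N1, Coalgebra.counit (R := k) (h₁ i) •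
          (HopfAlgebra.antipode (R := k) (A i j) * x * B i j)
        = Coalgebra.counit (R := k) (h₁ i) • ((φ (k := k) x) ∘ₗ
            (Coalgebra.comul (R := k) (A := H))) (h₂ i) := by
      intro i hi
      rw [← Finset.smul_sum]
      congr 1
      rw [LinearMap.comp_apply, hc1 i hi, map_sum]
      exact Finset.sum_congr rfl fun j _ => by rw [φ_tmul]
    rw [Finset.sum_congr rfl step4] at key2
    have step5 : ∑ i ∈ s, Coalgebra.counit (R := k) (h₁ i) • ((φ (k := k) x) ∘ₗ
        (Coalgebra.comul (R := k) (A := H))) (h₂ i)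
        = ∑ i ∈ s, HopfAlgebra.antipode (R := k) (h₁ i) * x * h₂ i := by
      calc ∑ i ∈ s, Coalgebra.counit (R := k) (h₁ i) • ((φ (k := k) x) ∘ₗ
            (Coalgebra.comul (R := k) (A := H))) (h₂ i)
          = ((φ (k := k) x) ∘ₗ (Coalgebra.comul (R := k) (A := H)))
              (∑ i ∈ s, Coalgebra.counit (R := k) (h₁ i) • h₂ i) := by
            rw [map_sum]
            exact Finset.sum_congr rfl fun i _ => (map_smul _ _ _).symm
        _ = ((φ (k := k) x) ∘ₗ (Coalgebra.comul (R := k) (A := H))) h := by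
            rw [sum_counit_left hΔ]
        _ = ∑ i ∈ s, HopfAlgebra.antipode (R := k) (h₁ i) * x * h₂ i := by
            rw [LinearMap.comp_apply, hΔ, map_sum]
            exact Finset.sum_congr rfl fun i _ => by rw [φ_tmul]
    rw [step5] at key2
    exact key2
  refine ⟨adj, fun a b => ?_⟩
  -- commutativity
  obtain ⟨n, p, q, hb⟩ := rep_nat (k := k) (Coalgebra.comul (R := k) b)
  choose m u v e using fun i : ℕ => rep_nat (k := k) (Coalgebra.comul (R := k) (q i))
  choose m' u' v' e' using fun i : ℕ => rep_nat (k := k) (Coalgebra.comul (R := k) (p i))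
  set Rb : Coalgebra.Repr k b ℕ := ⟨Finset.range n, p, q, hb.symm⟩ with hRb
  have coas := Coalgebra.sum_tmul_tmul_eq (R := k) Rb
    (fun i => ⟨Finset.range (m' i), u' i, v' i, (e' i).symm⟩)
    (fun i => ⟨Finset.range (m i), u i, v i, (e i).symm⟩)
  have coas2 := congrArg (Θ (k := k) a) coas
  simp only [map_sum, Θ_tmul] at coas2
  -- LHS of coas2 is a * b
  have lhs_eq : ∑ i ∈ Finset.range n, ∑ j ∈ Finset.range (m' i),
      u' i j * (HopfAlgebra.antipode (R := k) (v' i j) * a * q i) = a * b := by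
    calc ∑ i ∈ Finset.range n, ∑ j ∈ Finset.range (m' i),
        u' i j * (HopfAlgebra.antipode (R := k) (v' i j) * a * q i)
        = ∑ i ∈ Finset.range n, (∑ j ∈ Finset.range (m' i),
            u' i j * HopfAlgebra.antipode (R := k) (v' i j)) * (a * q i) := by
          refine Finset.sum_congr rfl fun i _ => ?_
          rw [Finset.sum_mul]
          exact Finset.sum_congr rfl fun j _ => by noncomm_ring
      _ = ∑ i ∈ Finset.range n, algebraMap k H (Coalgebra.counit (R := k) (p i))
            * (a * q i) := by
          refine Finset.sum_congr rfl fun i _ => ?_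
          rw [sum_mul_antipode' (e' i)]
      _ = a * ∑ i ∈ Finset.range n, Coalgebra.counit (R := k) (p i) • q i := by
          rw [Finset.mul_sum]
          refine Finset.sum_congr rfl fun i _ => ?_
          rw [Algebra.smul_def, ← mul_assoc, Algebra.commutes, mul_assoc]
      _ = a * b := by rw [sum_counit_left hb]
  -- RHS of coas2 is b * a
  have rhs_eq : ∑ i ∈ Finset.range n, ∑ j ∈ Finset.range (m i),
      p i * (HopfAlgebra.antipode (R := k) (u i j) * a * v i j) = b * a := by
    calc ∑ i ∈ Finset.range n, ∑ j ∈ Finset.range (m i),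
        p i * (HopfAlgebra.antipode (R := k) (u i j) * a * v i j)
        = ∑ i ∈ Finset.range n, p i * ∑ j ∈ Finset.range (m i),
            HopfAlgebra.antipode (R := k) (u i j) * a * v i j := by
          exact Finset.sum_congr rfl fun i _ => (Finset.mul_sum _ _ _).symm
      _ = ∑ i ∈ Finset.range n, p i * (Coalgebra.counit (R := k) (q i) • a) := by
          refine Finset.sum_congr rfl fun i _ => ?_
          rw [adj a (q i) ℕ (Finset.range (m i)) (u i) (v i) (e i)]
      _ = (∑ i ∈ Finset.range n, Coalgebra.counit (R := k) (q i) • p i) * a := by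
          rw [Finset.sum_mul]
          exact Finset.sum_congr rfl fun i _ => by
            rw [mul_smul_comm, smul_mul_assoc]
      _ = b * a := by rw [sum_counit_right hb]
  rw [lhs_eq, rhs_eq] at coas2
  exact coas2
end

section
/- Let H be a commutative Hopf algebra over a field k and let T : H ⊗ H → H ⊗ H be the linear map determined by T(a ⊗ b) = b₍₁₎ ⊗ S(b₍₂₎) a b₍₃₎. Then T is an involution: T ∘ T = id_{H ⊗ H}. -/
open TensorProduct

/-- Any element of a triple tensor product is a finite `ℕ`-indexed sum of pure tensors. -/
lemma exists_range_repr {k H : Type*} [Field k] [CommRing H] [Algebra k H]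
    (x : H ⊗[k] (H ⊗[k] H)) :
    ∃ (n : ℕ) (b₁ b₂ b₃ : ℕ → H),
      x = ∑ i ∈ Finset.range n, b₁ i ⊗ₜ[k] (b₂ i ⊗ₜ[k] b₃ i) := by
  induction x with
  | zero => exact ⟨0, 0, 0, 0, by simp⟩
  | tmul u y =>
    induction y with
    | zero => exact ⟨0, 0, 0, 0, by simp⟩
    | tmul v w => exact ⟨1, fun _ => u, fun _ => v, fun _ => w, by simp⟩
    | add y₁ y₂ h₁ h₂ =>
      obtain ⟨n, b₁, b₂, b₃, hb⟩ := h₁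
      obtain ⟨m, c₁, c₂, c₃, hc⟩ := h₂
      refine ⟨n + m, fun i => if i < n then b₁ i else c₁ (i - n),
        fun i => if i < n then b₂ i else c₂ (i - n),
        fun i => if i < n then b₃ i else c₃ (i - n), ?_⟩
      rw [TensorProduct.tmul_add, hb, hc, Finset.sum_range_add]
      congr 1
      · exact Finset.sum_congr rfl fun i hi => by
          simp [Finset.mem_range.mp hi]
      · exact Finset.sum_congr rfl fun i _ => by simp
  | add x₁ x₂ h₁ h₂ =>
    obtain ⟨n, b₁, b₂, b₃, hb⟩ := h₁
    obtain ⟨m, c₁, c₂, c₃, hc⟩ := h₂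
    refine ⟨n + m, fun i => if i < n then b₁ i else c₁ (i - n),
      fun i => if i < n then b₂ i else c₂ (i - n),
      fun i => if i < n then b₃ i else c₃ (i - n), ?_⟩
    rw [hb, hc, Finset.sum_range_add]
    congr 1
    · exact Finset.sum_congr rfl fun i hi => by
        simp [Finset.mem_range.mp hi]
    · exact Finset.sum_congr rfl fun i _ => by simp

/-- let `H` be a commutative Hopf algebra over a field `k` and let
`T : H ⊗ H → H ⊗ H` be the linear map determined by
`T(a ⊗ b) = b₍₁₎ ⊗ S(b₍₂₎) a b₍₃₎` (Sweedler sums expressed via finite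
decompositions of the iterated comultiplication). Then `T` is an involution:
`T ∘ T = id`. -/
theorem T_involutive_of_commutative (k H : Type*) [Field k] [CommRing H]
    [HopfAlgebra k H]
    (T : H ⊗[k] H →ₗ[k] H ⊗[k] H)
    (hT : ∀ (a b : H) (ι : Type) (s : Finset ι) (b₁ b₂ b₃ : ι → H),
      (LinearMap.lTensor H (Coalgebra.comul (R := k)))
          (Coalgebra.comul (R := k) b) =
        ∑ i ∈ s, b₁ i ⊗ₜ[k] (b₂ i ⊗ₜ[k] b₃ i) →
      T (a ⊗ₜ[k] b) =
        ∑ i ∈ s, b₁ i ⊗ₜ[k] (HopfAlgebra.antipode (R := k) (b₂ i) * a * b₃ i)) :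
    T ∘ₗ T = LinearMap.id := by
  have key : ∀ a b : H, T (a ⊗ₜ[k] b) = b ⊗ₜ[k] a := by
    intro a b
    obtain ⟨n, b₁, b₂, b₃, hdec⟩ := exists_range_repr
      ((LinearMap.lTensor H (Coalgebra.comul (R := k))) (Coalgebra.comul (R := k) b))
    rw [hT a b ℕ (Finset.range n) b₁ b₂ b₃ hdec]
    -- push the map `u ⊗ v ↦ a * (S u * v)` through the decomposition
    set g : H ⊗[k] H →ₗ[k] H :=
      (LinearMap.mulLeft k a) ∘ₗ (LinearMap.mul' k H) ∘ₗ
        (HopfAlgebra.antipode (R := k) (A := H)).rTensor H with hg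
    have hΦ := congrArg (LinearMap.lTensor H g) hdec
    rw [map_sum] at hΦ
    have hpure : ∀ i, (LinearMap.lTensor H g) (b₁ i ⊗ₜ[k] (b₂ i ⊗ₜ[k] b₃ i)) =
        b₁ i ⊗ₜ[k] (HopfAlgebra.antipode (R := k) (b₂ i) * a * b₃ i) := by
      intro i
      simp only [LinearMap.lTensor_tmul, hg, LinearMap.comp_apply,
        LinearMap.rTensor_tmul, LinearMap.mul'_apply, LinearMap.mulLeft_apply]
      ring_nf
    have hgc : g ∘ₗ (Coalgebra.comul (R := k) (A := H)) =
        (LinearMap.toSpanSingleton k H a) ∘ₗ (Coalgebra.counit (R := k) (A := H)) := by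
      ext y
      simp only [LinearMap.comp_apply, hg, HopfAlgebra.mul_antipode_rTensor_comul_apply,
        LinearMap.mulLeft_apply, LinearMap.toSpanSingleton_apply]
      rw [Algebra.smul_def, mul_comm]
    have hleft : (LinearMap.lTensor H g)
        ((LinearMap.lTensor H (Coalgebra.comul (R := k))) (Coalgebra.comul (R := k) b)) =
        b ⊗ₜ[k] a := by
      rw [← LinearMap.comp_apply, ← LinearMap.lTensor_comp, hgc, LinearMap.lTensor_comp,
        LinearMap.comp_apply, Coalgebra.lTensor_counit_comul]
      simp
    calc ∑ i ∈ Finset.range n, b₁ i ⊗ₜ[k] (HopfAlgebra.antipode (R := k) (b₂ i) * a * b₃ i)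
        = ∑ i ∈ Finset.range n, (LinearMap.lTensor H g) (b₁ i ⊗ₜ[k] (b₂ i ⊗ₜ[k] b₃ i)) := by
          exact Finset.sum_congr rfl fun i _ => (hpure i).symm
      _ = b ⊗ₜ[k] a := by rw [← hΦ, hleft]
  apply TensorProduct.ext'
  intro a b
  simp [key a b, key b a]
end

section
/- Let B be a braided monoidal category with braiding c and let (A, m, η) be a commutative monoid object in B which is a symmetric object, i.e. c_{A,A} ∘ c_{A,A} = id_{A⊗A}. Then the free right A-module A ⊗ A is dyslectic: μ_{A⊗A} ∘ c_{A, A⊗A} ∘ c_{A⊗A, A} = μ_{A⊗A} as morphisms (A ⊗ A) ⊗ A → A ⊗ A. -/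
open CategoryTheory MonoidalCategory

/-- let `B` be a braided monoidal category and `(A, m, η)` a
commutative monoid object in `B` which is a symmetric object, i.e.
`c_{A,A} ∘ c_{A,A} = id`. Then the free right `A`-module `A ⊗ A` is dyslectic:
`μ_{A⊗A} ∘ c_{A,A⊗A} ∘ c_{A⊗A,A} = μ_{A⊗A}` as morphisms
`(A ⊗ A) ⊗ A ⟶ A ⊗ A`, where `μ_{A⊗A} = (id_A ⊗ m) ∘ α_{A,A,A}`.
(Compositions are written in diagrammatic order `≫`.) -/
theorem free_module_dyslectic_of_symmetric {B : Type*} [Category B]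
    [MonoidalCategory B] [BraidedCategory B] (A : Mon B)
    (hcomm : (β_ A.X A.X).hom ≫ MonObj.mul (X := A.X) = MonObj.mul (X := A.X))
    (hsym : (β_ A.X A.X).hom ≫ (β_ A.X A.X).hom = 𝟙 (A.X ⊗ A.X)) :
    (β_ (A.X ⊗ A.X) A.X).hom ≫ (β_ A.X (A.X ⊗ A.X)).hom ≫
        (α_ A.X A.X A.X).hom ≫ (A.X ◁ MonObj.mul (X := A.X)) =
      (α_ A.X A.X A.X).hom ≫ (A.X ◁ MonObj.mul (X := A.X)) := by
  simp only [BraidedCategory.braiding_tensor_left_hom, BraidedCategory.braiding_tensor_right_hom,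
    Category.assoc, Iso.inv_hom_id_assoc, Iso.hom_inv_id_assoc]
  rw [← comp_whiskerRight_assoc, hsym, id_whiskerRight, Category.id_comp, Iso.inv_hom_id_assoc,
    ← MonoidalCategory.whiskerLeft_comp, ← MonoidalCategory.whiskerLeft_comp, hcomm, hcomm]
end
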